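/- Let $K$ be a compact Hausdorff space containing a dense discrete subset $D$, and let $D \subseteq X \subseteq K$. Suppose that every sequence $(D_n)_{n\in\omega}$ of pairwise disjoint finite nonempty subsets of $D$ has an accumulation point in the Vietoris hyperspace $\mathrm{CL}(X)$. Then every sequence of nonempty finite subsets of $D$ has an accumulation point in $\mathrm{CL}(X)$, and hence $\mathrm{CL}(X)$ is pseudocompact. -/

import Mathlib

open Filter

/-- The Vietoris hyperspace `CL(X)` of nonempty closed subsets of `X`. -/
def CL (X : Type*) [TopologicalSpace X] : Type _ := {F : Set X // F.Nonempty ∧ IsClosed F}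

/-- The Vietoris topology. -/
instance CL.instTopologicalSpace (X : Type*) [TopologicalSpace X] : TopologicalSpace (CL X) :=
  TopologicalSpace.generateFrom
    {S | ∃ A : Set X, IsOpen A ∧
      (S = {F : CL X | F.1 ⊆ A} ∨ S = {F : CL X | (F.1 ∩ A).Nonempty})}

def vsub (Y : Type*) [TopologicalSpace Y] : Set (Set (CL Y)) :=
  {S | ∃ A : Set Y, IsOpen A ∧
      (S = {F : CL Y | F.1 ⊆ A} ∨ S = {F : CL Y | (F.1 ∩ A).Nonempty})}

lemma vsub_open {Y : Type*} [TopologicalSpace Y] {S : Set (CL Y)} (hS : S ∈ vsub Y) :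
    IsOpen S :=
  TopologicalSpace.isOpen_generateFrom_of_mem hS

lemma CL.mapClusterPt_of {Y : Type*} [TopologicalSpace Y] (F : CL Y) (Q : ℕ → CL Y)
    (h : ∀ f : Set (Set (CL Y)), f.Finite → f ⊆ vsub Y → F ∈ ⋂₀ f →
      ∃ᶠ n in atTop, Q n ∈ ⋂₀ f) : MapClusterPt F atTop Q := by
  rw [mapClusterPt_iff_frequently]
  intro s hs
  obtain ⟨t, ⟨f, ⟨hfin, hsub⟩, rfl⟩, hFt, hts⟩ :=
    (TopologicalSpace.isTopologicalBasis_of_subbasis rfl).mem_nhds_iff.mp hs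
  exact (h f hfin hsub hFt).mono fun n hn => hts hn

lemma transfer_mono {K : Type*} [TopologicalSpace K] {X : Set K}
    (Un : ℕ → Set K) (hU : Monotone Un)
    (hne : ∃ d, d ∈ Un 0 ∧ d ∈ X)
    (Q : ℕ → CL ↥X) (hQ : ∀ k, (Q k).1 = {x : ↥X | ↑x ∈ Un k}) :
    ∃ F : CL ↥X, MapClusterPt F atTop Q := by
  classical
  set W : Set ↥X := {x : ↥X | ∃ k, ↑x ∈ Un k} with hW
  obtain ⟨d, hd0, hdX⟩ := hne
  refine ⟨⟨closure W, ⟨⟨d, hdX⟩, subset_closure ⟨0, hd0⟩⟩, isClosed_closure⟩, ?_⟩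
  apply CL.mapClusterPt_of
  intro f hfin hsub hF
  apply Filter.Eventually.frequently
  simp only [Set.mem_sInter]
  rw [eventually_all_finite hfin]
  intro S hS
  obtain ⟨A, hAo, rfl | rfl⟩ := hsub hS
  · filter_upwards with k
    intro x hx
    rw [hQ k] at hx
    exact hF _ hS (subset_closure ⟨k, hx⟩)
  · have hcl : (closure W ∩ A).Nonempty := hF _ hS
    obtain ⟨x, hxW, hxA⟩ := hcl
    obtain ⟨y, hyA, k₀, hy⟩ := mem_closure_iff.mp hxW A hAo hxA
    filter_upwards [Filter.eventually_ge_atTop k₀] with k hk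
    exact ⟨y, by rw [hQ k]; exact hU hk hy, hyA⟩

lemma transfer {K : Type*} [TopologicalSpace K] {X : Set K}
    (Un Dn : ℕ → Set K) (hU : Monotone Un)
    (Q QD : ℕ → CL ↥X)
    (hQ : ∀ k, (Q k).1 = {x : ↥X | ↑x ∈ Un k ∪ Dn k})
    (hQD : ∀ k, (QD k).1 = {x : ↥X | ↑x ∈ Dn k})
    (G : CL ↥X) (hG : MapClusterPt G atTop QD) :
    ∃ F : CL ↥X, MapClusterPt F atTop Q := by
  classical
  set W : Set ↥X := {x : ↥X | ∃ k, ↑x ∈ Un k} with hW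
  refine ⟨⟨closure W ∪ G.1, G.2.1.mono Set.subset_union_right, isClosed_closure.union G.2.2⟩, ?_⟩
  set F : CL ↥X := ⟨closure W ∪ G.1, G.2.1.mono Set.subset_union_right,
    isClosed_closure.union G.2.2⟩ with hFdef
  apply CL.mapClusterPt_of
  intro f hfin hsub hF
  set f' : Set (Set (CL ↥X)) := {S | S ∈ f ∧ ∃ A : Set ↥X, IsOpen A ∧
      (S = {H : CL ↥X | H.1 ⊆ A} ∨
        (S = {H : CL ↥X | (H.1 ∩ A).Nonempty} ∧ (G.1 ∩ A).Nonempty))} with hf'def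
  have hf'f : f' ⊆ f := fun S hS => hS.1
  have hf'open : IsOpen (⋂₀ f') := by
    refine Set.Finite.isOpen_sInter (hfin.subset hf'f) fun S hS => vsub_open ?_
    obtain ⟨A, hAo, h | h⟩ := hS.2
    · exact ⟨A, hAo, Or.inl h⟩
    · exact ⟨A, hAo, Or.inr h.1⟩
  have hGmem : G ∈ ⋂₀ f' := by
    intro S hS
    obtain ⟨hSf, A, hAo, h | h⟩ := hS
    · rw [h]
      have hFA : F.1 ⊆ A := by have := hF S hSf; rw [h] at this; exact this
      exact fun x hx => hFA (Or.inr hx)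
    · rw [h.1]; exact h.2
  have hfr : ∃ᶠ k in atTop, QD k ∈ ⋂₀ f' :=
    (mapClusterPt_iff_frequently.mp hG) _ (hf'open.mem_nhds hGmem)
  have hev : ∀ᶠ k in atTop, ∀ S ∈ f,
      (∃ A : Set ↥X, IsOpen A ∧ S = {H : CL ↥X | (H.1 ∩ A).Nonempty} ∧
        ¬(G.1 ∩ A).Nonempty) → Q k ∈ S := by
    rw [eventually_all_finite hfin]
    intro S hS
    by_cases h : ∃ A : Set ↥X, IsOpen A ∧ S = {H : CL ↥X | (H.1 ∩ A).Nonempty} ∧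
        ¬(G.1 ∩ A).Nonempty
    · obtain ⟨A, hAo, rfl, hGA⟩ := h
      have hFA : (F.1 ∩ A).Nonempty := hF _ hS
      obtain ⟨x, hx, hxA⟩ := hFA
      have hxW : x ∈ closure W := by
        rcases hx with hx | hx
        · exact hx
        · exact absurd ⟨x, hx, hxA⟩ hGA
      obtain ⟨y, hyA, k₀, hy⟩ := mem_closure_iff.mp hxW A hAo hxA
      filter_upwards [Filter.eventually_ge_atTop k₀] with k hk _
      exact ⟨y, by rw [hQ k]; exact Or.inl (hU hk hy), hyA⟩
    · filter_upwards with k h'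
      exact absurd h' h
  refine (hfr.and_eventually hev).mono ?_
  rintro k ⟨hk1, hk2⟩ S hS
  obtain ⟨A, hAo, hc⟩ := hsub hS
  rcases hc with rfl | rfl
  · have hQDA : (QD k).1 ⊆ A := hk1 _ ⟨hS, A, hAo, Or.inl rfl⟩
    have hFA : F.1 ⊆ A := hF _ hS
    intro x hx
    rw [hQ k] at hx
    rcases hx with hx | hx
    · exact hFA (Or.inl (subset_closure ⟨k, hx⟩))
    · exact hQDA (by rw [hQD k]; exact hx)
  · by_cases hGA : (G.1 ∩ A).Nonempty
    · obtain ⟨x, hx, hxA⟩ := hk1 _ ⟨hS, A, hAo, Or.inr ⟨rfl, hGA⟩⟩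
      rw [hQD k] at hx
      exact ⟨x, by rw [hQ k]; exact Or.inr hx, hxA⟩
    · exact hk2 _ hS ⟨A, hAo, rfl, hGA⟩

lemma exists_finite_approx {K : Type*} [TopologicalSpace K] [T1Space K]
    {D X : Set K} (hDdense : Dense D) (hDX : D ⊆ X)
    (F : CL ↥X) {U : Set (CL ↥X)} (hU : U ∈ nhds F) :
    ∃ (E : Set K) (P : CL ↥X), E.Finite ∧ E.Nonempty ∧ E ⊆ D ∧
      P.1 = {x : ↥X | ↑x ∈ E} ∧ P ∈ U := by
  classical
  obtain ⟨t, ⟨f, ⟨hfin, hsub⟩, rfl⟩, hFt, htU⟩ :=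
    (TopologicalSpace.isTopologicalBasis_of_subbasis rfl).mem_nhds_iff.mp hU
  have hsub' : ∀ S : Set (CL ↥X), ∃ A : Set ↥X, IsOpen A ∧ (S ∈ f →
      (S = {H : CL ↥X | H.1 ⊆ A} ∨ S = {H : CL ↥X | (H.1 ∩ A).Nonempty})) := by
    intro S
    by_cases hS : S ∈ f
    · obtain ⟨A, hAo, hc⟩ := hsub hS
      exact ⟨A, hAo, fun _ => hc⟩
    · exact ⟨Set.univ, isOpen_univ, fun h => absurd h hS⟩
  choose A hAo hAc using hsub'
  set A₀ : Set ↥X := ⋂ S ∈ f, (if S = {H : CL ↥X | H.1 ⊆ A S} then A S else Set.univ)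
    with hA₀def
  have hA₀o : IsOpen A₀ := by
    refine hfin.isOpen_biInter fun S hS => ?_
    split
    · exact hAo S
    · exact isOpen_univ
  have hFA₀ : F.1 ⊆ A₀ := by
    intro x hx
    refine Set.mem_iInter₂.mpr fun S hS => ?_
    split
    · next h =>
      have := hFt S hS
      rw [h] at this
      exact this hx
    · exact Set.mem_univ x
  have key : ∀ O : Set ↥X, IsOpen O → O.Nonempty →
      ∃ d : K, d ∈ D ∧ ∃ hd : d ∈ X, (⟨d, hd⟩ : ↥X) ∈ O := by
    rintro O hO ⟨x, hx⟩
    obtain ⟨V, hVo, hVeq⟩ := isOpen_induced_iff.mp hO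
    have hxV : (x : K) ∈ V := by rw [← hVeq] at hx; exact hx
    obtain ⟨d, hdD, hdV⟩ := hDdense.exists_mem_open hVo ⟨x, hxV⟩
    refine ⟨d, hdD, hDX hdD, ?_⟩
    rw [← hVeq]
    exact hdV
  have hA₀ne : A₀.Nonempty := F.2.1.mono hFA₀
  obtain ⟨d₀, hd₀D, hd₀X, hd₀⟩ := key A₀ hA₀o hA₀ne
  have keyS : ∀ S : Set (CL ↥X), ∃ d : K, d ∈ D ∧ ∃ hd : d ∈ X, (⟨d, hd⟩ : ↥X) ∈ A₀ ∧
      ((S ∈ f ∧ S ≠ {H : CL ↥X | H.1 ⊆ A S}) → (⟨d, hd⟩ : ↥X) ∈ A S) := by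
    intro S
    by_cases h : S ∈ f ∧ S ≠ {H : CL ↥X | H.1 ⊆ A S}
    · have hSm : S = {H : CL ↥X | (H.1 ∩ A S).Nonempty} := (hAc S h.1).resolve_left h.2
      have hFS := hFt S h.1
      rw [hSm] at hFS
      obtain ⟨x, hxF, hxA⟩ := hFS
      obtain ⟨d, hdD, hd, h1⟩ := key _ (hA₀o.inter (hAo S)) ⟨x, hFA₀ hxF, hxA⟩
      exact ⟨d, hdD, hd, h1.1, fun _ => h1.2⟩
    · exact ⟨d₀, hd₀D, hd₀X, hd₀, fun h' => absurd h' h⟩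
  choose e heD heX heA₀ heA using keyS
  set E : Set K := insert d₀ (e '' f) with hEdef
  have hEfin : E.Finite := (hfin.image e).insert d₀
  have hED : E ⊆ D := by
    rintro d (rfl | ⟨S, hS, rfl⟩)
    · exact hd₀D
    · exact heD S
  have hPcl : IsClosed {x : ↥X | ↑x ∈ E} := hEfin.isClosed.preimage continuous_subtype_val
  have hPne : ({x : ↥X | ↑x ∈ E} : Set ↥X).Nonempty := ⟨⟨d₀, hd₀X⟩, Set.mem_insert _ _⟩
  have hEA₀ : ∀ x : ↥X, (x : K) ∈ E → x ∈ A₀ := by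
    rintro x hx
    rcases hx with h | ⟨S', _, h⟩
    · have hxe : x = ⟨d₀, hd₀X⟩ := Subtype.ext h
      rw [hxe]; exact hd₀
    · have hxe : x = ⟨e S', heX S'⟩ := Subtype.ext h.symm
      rw [hxe]; exact heA₀ S'
  refine ⟨E, ⟨_, hPne, hPcl⟩, hEfin, ⟨d₀, Set.mem_insert _ _⟩, hED, rfl, htU ?_⟩
  intro S hS
  by_cases h : S = {H : CL ↥X | H.1 ⊆ A S}
  · rw [h]
    intro x hx
    have hx0 : x ∈ A₀ := hEA₀ x hx
    have := Set.mem_iInter₂.mp hx0 S hS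
    rwa [if_pos h] at this
  · have hSm : S = {H : CL ↥X | (H.1 ∩ A S).Nonempty} := (hAc S hS).resolve_left h
    rw [hSm]
    exact ⟨⟨e S, heX S⟩, Set.mem_insert_iff.mpr (Or.inr ⟨S, hS, rfl⟩), heA S ⟨hS, h⟩⟩
lemma dissect {K : Type*} (A : ℕ → Set K) (hfin : ∀ n, (A n).Finite) :
    ∃ (φ : ℕ → ℕ) (B : Set K), StrictMono φ ∧
      (Monotone fun k => A (φ k) ∩ B) ∧
      ∀ j k, j ≠ k → Disjoint (A (φ j) \ B) (A (φ k) \ B) := by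
  classical
  set u := Ultrafilter.of (atTop : Filter ℕ) with hu
  set B : Set K := {d | {n | d ∈ A n} ∈ u} with hB
  have step : ∀ (n : ℕ) (V : Finset K), ∃ m, n < m ∧ A n ∩ B ⊆ A m ∧
      ∀ d ∈ V, d ∉ B → d ∉ A m := by
    intro n V
    have h1 : {m | n < m} ∈ u := Ultrafilter.of_le atTop (Ioi_mem_atTop n)
    have h2 : {m | ∀ d ∈ A n ∩ B, d ∈ A m} ∈ u := by
      have he : {m | ∀ d ∈ A n ∩ B, d ∈ A m} = ⋂ d ∈ A n ∩ B, {m | d ∈ A m} := by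
        ext m; simp
      rw [he]
      rw [show ((⋂ d ∈ A n ∩ B, {m | d ∈ A m}) ∈ u) ↔ _ from
        Filter.biInter_mem ((hfin n).inter_of_left B)]
      exact fun d hd => hd.2
    have h3 : {m | ∀ d ∈ V, d ∉ B → d ∉ A m} ∈ u := by
      have he : {m | ∀ d ∈ V, d ∉ B → d ∉ A m} = ⋂ d ∈ (↑V : Set K) \ B, {n | d ∈ A n}ᶜ := by
        ext m
        simp only [Set.mem_setOf_eq, Set.mem_iInter, Set.mem_diff, Finset.mem_coe,
          Set.mem_compl_iff, and_imp]
      rw [he]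
      rw [show ((⋂ d ∈ (↑V : Set K) \ B, {n | d ∈ A n}ᶜ) ∈ u) ↔ _ from
        Filter.biInter_mem (V.finite_toSet.diff (t := B))]
      exact fun d hd => (Ultrafilter.compl_mem_iff_notMem).mpr hd.2
    obtain ⟨m, hm⟩ := Filter.nonempty_of_mem (Filter.inter_mem h1 (Filter.inter_mem h2 h3))
    exact ⟨m, hm.1, fun d hd => hm.2.1 d hd, hm.2.2⟩
  let next : ℕ × Finset K → ℕ × Finset K := fun p =>
    ⟨(step p.1 p.2).choose, p.2 ∪ (hfin (step p.1 p.2).choose).toFinset⟩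
  let g : ℕ → ℕ × Finset K := fun k => next^[k] (0, (hfin 0).toFinset)
  have hg : ∀ k, g (k + 1) = next (g k) := fun k => Function.iterate_succ_apply' next k _
  have hstep : ∀ k, (g k).1 < (g (k+1)).1 ∧ (A (g k).1 ∩ B ⊆ A (g (k+1)).1) ∧
      ∀ d ∈ ((g k).2 : Set K), d ∉ B → d ∉ A (g (k+1)).1 := by
    intro k
    have h := (step (g k).1 (g k).2).choose_spec
    rw [hg k]
    exact ⟨h.1, h.2.1, fun d hd => h.2.2 d hd⟩
  have hVmono : ∀ j k, j ≤ k → ((g j).2 : Set K) ⊆ ((g k).2 : Set K) := by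
    intro j k
    induction k with
    | zero => intro hjk; have : j = 0 := Nat.le_zero.mp hjk; subst this; rfl
    | succ n ih =>
      intro hjk
      rcases Nat.lt_succ_iff_lt_or_eq.mp (Nat.lt_succ_of_le hjk) with h | h
      · refine (ih (Nat.lt_succ_iff.mp h)).trans ?_
        rw [hg n]
        simp only [next, Finset.coe_union]
        exact Set.subset_union_left
      · subst h; rfl
  have hAV : ∀ k, A (g k).1 ⊆ ((g k).2 : Set K) := by
    intro k
    induction k with
    | zero => simp [g, Set.Finite.coe_toFinset]
    | succ n ih =>
      rw [hg n]
      simp only [next, Finset.coe_union, Set.Finite.coe_toFinset]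
      exact Set.subset_union_right
  have hdisj : ∀ j k, j < k → Disjoint (A (g j).1 \ B) (A (g k).1 \ B) := by
    intro j k hjk
    rw [Set.disjoint_left]
    intro d hdj hdk
    obtain ⟨l, rfl⟩ : ∃ l, k = (j + l) + 1 := ⟨k - j - 1, by omega⟩
    have h1 : d ∈ ((g (j + l)).2 : Set K) :=
      hVmono j (j + l) (by omega) (hAV j hdj.1)
    exact (hstep (j + l)).2.2 d h1 hdj.2 hdk.1
  refine ⟨fun k => (g k).1, B, strictMono_nat_of_lt_succ fun k => (hstep k).1,
    monotone_nat_of_le_succ fun k d hd => ⟨(hstep k).2.1 hd, hd.2⟩, ?_⟩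
  intro j k hjk
  rcases lt_or_gt_of_ne hjk with h | h
  · exact hdisj _ _ h
  · exact (hdisj _ _ h).symm
/-- Let `K` be a compactification of a discrete space `D` and `D ⊆ X ⊆ K`.
If every sequence of pairwise disjoint finite nonempty subsets of `D` has an accumulation
point in `CL(X)`, then every sequence of finite nonempty subsets of `D` has an accumulation
point in `CL(X)`, and `CL(X)` is pseudocompact. -/
theorem stmt18 (K : Type*) [TopologicalSpace K] [CompactSpace K] [T2Space K]
    (D : Set K) (hDdense : Dense D) (hDdisc : DiscreteTopology ↥D)
    (X : Set K) (hDX : D ⊆ X)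
    (hyp : ∀ Dn : ℕ → Set K, (∀ n, (Dn n).Finite) → (∀ n, (Dn n).Nonempty) →
      (∀ n, Dn n ⊆ D) → (∀ m n, m ≠ n → Disjoint (Dn m) (Dn n)) →
      ∀ Q : ℕ → CL ↥X, (∀ n, (Q n).1 = {x : ↥X | ↑x ∈ Dn n}) →
        ∃ F : CL ↥X, MapClusterPt F atTop Q) :
    (∀ An : ℕ → Set K, (∀ n, (An n).Finite) → (∀ n, (An n).Nonempty) →
      (∀ n, An n ⊆ D) →
      ∀ Q : ℕ → CL ↥X, (∀ n, (Q n).1 = {x : ↥X | ↑x ∈ An n}) →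
        ∃ F : CL ↥X, MapClusterPt F atTop Q) ∧
    (∀ f : CL ↥X → ℝ, Continuous f → Bornology.IsBounded (Set.range f)) := by
  classical
  have h1 : ∀ An : ℕ → Set K, (∀ n, (An n).Finite) → (∀ n, (An n).Nonempty) →
      (∀ n, An n ⊆ D) →
      ∀ Q : ℕ → CL ↥X, (∀ n, (Q n).1 = {x : ↥X | ↑x ∈ An n}) →
        ∃ F : CL ↥X, MapClusterPt F atTop Q := by
    intro An hAfin hAne hAD Q hQ
    obtain ⟨φ, B, hφ, hUmono, hdisj⟩ := dissect An hAfin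
    by_cases hinf : {k | An (φ k) \ B = ∅}.Infinite
    · set ψ := Nat.nth (fun k => An (φ k) \ B = ∅) with hψdef
      have hψmem : ∀ i, An (φ (ψ i)) \ B = ∅ := fun i => Nat.nth_mem_of_infinite hinf i
      have hψmono : StrictMono ψ := Nat.nth_strictMono hinf
      have hsubAB : ∀ i, An (φ (ψ i)) ∩ B = An (φ (ψ i)) := fun i =>
        Set.inter_eq_left.mpr (Set.diff_eq_empty.mp (hψmem i))
      obtain ⟨d, hd⟩ := hAne (φ (ψ 0))
      obtain ⟨F, hF⟩ := transfer_mono (X := X) (fun i => An (φ (ψ i)) ∩ B)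
        (hUmono.comp hψmono.monotone)
        ⟨d, by rw [hsubAB 0]; exact hd, hDX (hAD _ hd)⟩
        (Q ∘ (φ ∘ ψ))
        (fun i => by simp only [Function.comp_apply]; rw [hsubAB i]; exact hQ _)
      exact ⟨F, hF.of_comp ((hφ.comp hψmono).tendsto_atTop)⟩
    · have hinf' : {k | (An (φ k) \ B).Nonempty}.Infinite := by
        have h2 : {k | An (φ k) \ B = ∅}ᶜ.Infinite :=
          Set.Finite.infinite_compl (Set.not_infinite.mp hinf)
        convert h2 using 1
        ext k
        simp [Set.nonempty_iff_ne_empty]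
      set ψ := Nat.nth (fun k => (An (φ k) \ B).Nonempty) with hψdef
      have hψne : ∀ i, (An (φ (ψ i)) \ B).Nonempty := fun i => Nat.nth_mem_of_infinite hinf' i
      have hψmono : StrictMono ψ := Nat.nth_strictMono hinf'
      set Dn : ℕ → Set K := fun i => An (φ (ψ i)) \ B with hDndef
      have hQDcl : ∀ i, IsClosed {x : ↥X | ↑x ∈ Dn i} := fun i =>
        (((hAfin _).diff (t := B)).isClosed).preimage continuous_subtype_val
      have hQDne : ∀ i, ({x : ↥X | ↑x ∈ Dn i} : Set ↥X).Nonempty := by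
        intro i
        obtain ⟨d, hd⟩ := hψne i
        exact ⟨⟨d, hDX (hAD _ hd.1)⟩, hd⟩
      set QD : ℕ → CL ↥X := fun i => ⟨_, hQDne i, hQDcl i⟩ with hQDdef
      obtain ⟨G, hG⟩ := hyp Dn (fun i => (hAfin _).diff (t := B)) hψne (fun i d hd => hAD _ hd.1)
        (fun m n hmn => hdisj (ψ m) (ψ n) fun h => hmn (hψmono.injective h))
        QD (fun i => rfl)
      obtain ⟨F, hF⟩ := transfer (X := X) (fun i => An (φ (ψ i)) ∩ B) Dn
        (hUmono.comp hψmono.monotone) (Q ∘ (φ ∘ ψ)) QD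
        (fun i => by
          simp only [Function.comp_apply]
          rw [show An (φ (ψ i)) ∩ B ∪ Dn i = An (φ (ψ i)) from Set.inter_union_diff _ _]
          exact hQ _)
        (fun i => rfl) G hG
      exact ⟨F, hF.of_comp ((hφ.comp hψmono).tendsto_atTop)⟩
  refine ⟨h1, ?_⟩
  intro f hf
  by_contra hb
  rw [isBounded_iff_forall_norm_le] at hb
  push_neg at hb
  have pick : ∀ n : ℕ, ∃ (P : CL ↥X) (E : Set K), E.Finite ∧ E.Nonempty ∧ E ⊆ D ∧
      P.1 = {x : ↥X | ↑x ∈ E} ∧ (n : ℝ) < |f P| := by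
    intro n
    obtain ⟨y, ⟨F₀, rfl⟩, hy⟩ := hb ((n : ℝ) + 1)
    have hV : f ⁻¹' Metric.ball (f F₀) 1 ∈ nhds F₀ :=
      hf.continuousAt.preimage_mem_nhds (Metric.ball_mem_nhds _ one_pos)
    obtain ⟨E, P, hEf, hEn, hED, hP1, hPV⟩ := exists_finite_approx hDdense hDX F₀ hV
    refine ⟨P, E, hEf, hEn, hED, hP1, ?_⟩
    have h2 : |f P - f F₀| < 1 := by
      have := hPV
      simp only [Set.mem_preimage, Metric.mem_ball, Real.dist_eq] at this
      exact this
    have h3 : (n : ℝ) + 1 < |f F₀| := by simpa [Real.norm_eq_abs] using hy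
    have h4 : |f F₀| - |f P| ≤ |f F₀ - f P| := abs_sub_abs_le_abs_sub _ _
    rw [abs_sub_comm] at h4
    linarith
  choose P E hEf hEn hED hP1 hPn using pick
  obtain ⟨F, hF⟩ := h1 E hEf hEn hED P hP1
  have hc : MapClusterPt (f F) atTop (f ∘ P) :=
    MapClusterPt.continuousAt_comp hf.continuousAt hF
  have hfr := (mapClusterPt_iff_frequently.mp hc) (Metric.ball (f F) 1) (Metric.ball_mem_nhds _ one_pos)
  obtain ⟨n, hball, hn⟩ :=
    (hfr.and_eventually (eventually_ge_atTop (⌈|f F|⌉₊ + 1))).exists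
  have h5 : |f (P n) - f F| < 1 := by
    simpa [Real.dist_eq] using hball
  have h6 : |f (P n)| - |f F| ≤ |f (P n) - f F| := abs_sub_abs_le_abs_sub _ _
  have h7 : (n : ℝ) < |f (P n)| := hPn n
  have h8 : |f F| ≤ (⌈|f F|⌉₊ : ℝ) := Nat.le_ceil _
  have h9 : ((⌈|f F|⌉₊ + 1 : ℕ) : ℝ) ≤ (n : ℝ) := Nat.cast_le.mpr hn
  push_cast at h9
  linarith
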